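/- Let 5/9 < θ < 1. Then the system x³ + (18/5)·(θ²/2^{1/3})·x·y² = x, (9/5)·θ·x²·y + (6/7)·(θ³/2^{1/3})·y³ = y has exactly nine real solutions: (0,0), (±1,0), (0, ±y₁), (±x₁, ±y₂) (all four sign combinations), where y₁ = (2^{1/6}/θ)·√(7/(6θ)), x₁ = √(1 − (21/164)·(9θ−5)/θ), and y₂ = √(105/164)·(1/(θ·2^{1/3}))·√((9θ−5)/(9θ)). -/

import Mathlib

open MeasureTheory Set

noncomputable def cbrt (x : ℝ) : ℝ := Real.sign x * |x| ^ ((1:ℝ)/3)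

theorem stmt10 (θ : ℝ) (hθ0 : 5/9 < θ) (hθ1 : θ < 1) (x y : ℝ) :
    (x^3 + (18/5) * (θ^2 / cbrt 2) * x * y^2 = x ∧
     (9/5) * θ * x^2 * y + (6/7) * (θ^3 / cbrt 2) * y^3 = y) ↔
      ((x, y) = (0, 0) ∨ (x, y) = (1, 0) ∨ (x, y) = (-1, 0) ∨
       (x, y) = (0, (2:ℝ)^((1:ℝ)/6) / θ * Real.sqrt (7/(6*θ))) ∨
       (x, y) = (0, -((2:ℝ)^((1:ℝ)/6) / θ * Real.sqrt (7/(6*θ)))) ∨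
       (x, y) = (Real.sqrt (1 - (21/164) * (9*θ - 5)/θ),
                 Real.sqrt (105/164) * (1/(θ * cbrt 2)) * Real.sqrt ((9*θ - 5)/(9*θ))) ∨
       (x, y) = (Real.sqrt (1 - (21/164) * (9*θ - 5)/θ),
                 -(Real.sqrt (105/164) * (1/(θ * cbrt 2)) * Real.sqrt ((9*θ - 5)/(9*θ)))) ∨
       (x, y) = (-Real.sqrt (1 - (21/164) * (9*θ - 5)/θ),
                 Real.sqrt (105/164) * (1/(θ * cbrt 2)) * Real.sqrt ((9*θ - 5)/(9*θ))) ∨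
       (x, y) = (-Real.sqrt (1 - (21/164) * (9*θ - 5)/θ),
                 -(Real.sqrt (105/164) * (1/(θ * cbrt 2)) * Real.sqrt ((9*θ - 5)/(9*θ))))) := by
  have hθp : (0:ℝ) < θ := by linarith
  have hθne : θ ≠ 0 := ne_of_gt hθp
  have hθ5 : (0:ℝ) < 9*θ - 5 := by linarith
  set c : ℝ := (2:ℝ)^((1:ℝ)/3) with hcdef
  have hcpos : 0 < c := Real.rpow_pos_of_pos (by norm_num) _
  have hcne : c ≠ 0 := ne_of_gt hcpos
  have hcbrt : cbrt 2 = c := by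
    simp [cbrt, Real.sign_of_pos, abs_of_pos, show (0:ℝ) < 2 by norm_num]
    rw [hcdef]; norm_num
  have hc3 : c^3 = 2 := by
    rw [hcdef, ← Real.rpow_natCast ((2:ℝ)^((1:ℝ)/3)) 3, ← Real.rpow_mul (by norm_num)]
    norm_num
  have h6sq : ((2:ℝ)^((1:ℝ)/6))^2 = c := by
    rw [hcdef, ← Real.rpow_natCast ((2:ℝ)^((1:ℝ)/6)) 2, ← Real.rpow_mul (by norm_num)]
    norm_num
  rw [hcbrt]
  set y1 : ℝ := (2:ℝ)^((1:ℝ)/6) / θ * Real.sqrt (7/(6*θ)) with hy1def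
  set x1 : ℝ := Real.sqrt (1 - (21/164) * (9*θ - 5)/θ) with hx1def
  set y2 : ℝ := Real.sqrt (105/164) * (1/(θ * c)) * Real.sqrt ((9*θ - 5)/(9*θ)) with hy2def
  have hXpos : (0:ℝ) < 1 - (21/164) * (9*θ - 5)/θ := by
    rw [sub_pos, div_lt_one hθp]; nlinarith
  have hy1pos : 0 < y1 := by
    rw [hy1def]
    have : (0:ℝ) < 7/(6*θ) := by positivity
    positivity
  have hy2pos : 0 < y2 := by
    rw [hy2def]
    have : (0:ℝ) < (9*θ - 5)/(9*θ) := by positivity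
    positivity
  have hx1pos : 0 < x1 := Real.sqrt_pos.mpr hXpos
  have hy1sq : 6*θ^3*y1^2 = 7*c := by
    rw [hy1def, mul_pow, div_pow, h6sq, Real.sq_sqrt (by positivity : (0:ℝ) ≤ 7/(6*θ))]
    field_simp
  have hx1sq : 164*θ*x1^2 = 105 - 25*θ := by
    rw [hx1def, Real.sq_sqrt hXpos.le]
    field_simp
    ring
  have hy2sq : 984*θ^3*y2^2 = 35*c*(9*θ-5) := by
    rw [hy2def, mul_pow, mul_pow,
      Real.sq_sqrt (by norm_num : (0:ℝ) ≤ (105:ℝ)/164),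
      Real.sq_sqrt (by positivity : (0:ℝ) ≤ (9*θ-5)/(9*θ))]
    field_simp
    linear_combination (258300 - 464940*θ) * hc3

  -- key verification lemmas
  have keyA : ∀ a b : ℝ, 164*θ*a^2 = 105-25*θ → 984*θ^3*b^2 = 35*c*(9*θ-5) →
      (a^3 + (18/5) * (θ^2 / c) * a * b^2 = a ∧
       (9/5) * θ * a^2 * b + (6/7) * (θ^3 / c) * b^3 = b) := by
    intro a b ha hb
    constructor
    · field_simp
      have H : 164*θ^3*((a^3*(5*c) + 18*θ^2*a*b^2) - a*(5*c)) = 0 := by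
        linear_combination 5*c*a*θ^2*ha + 3*θ^2*a*hb
      rcases mul_eq_zero.mp H with h | h
      · exact absurd h (by positivity)
      · linarith [sub_eq_zero.mp h]
    · field_simp
      have H : 164*θ*((9*θ*a^2*b*(7*c) + 6*θ^3*b^3*5) - b*(5*(7*c))) = 0 := by
        linear_combination 63*θ*c*b*ha + 5*θ*b*hb
      rcases mul_eq_zero.mp H with h | h
      · exact absurd h (by positivity)
      · linarith [sub_eq_zero.mp h]
  have keyB : ∀ b : ℝ, 6*θ^3*b^2 = 7*c →
      ((0:ℝ)^3 + (18/5) * (θ^2 / c) * 0 * b^2 = 0 ∧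
       (9/5) * θ * 0^2 * b + (6/7) * (θ^3 / c) * b^3 = b) := by
    intro b hb
    constructor
    · ring
    · field_simp
      linear_combination 5*b*hb
  have hcc : c * c⁻¹ = 1 := mul_inv_cancel₀ hcne
  constructor
  · rintro ⟨h1, h2⟩
    have h1' : x * (c*x^2 + (18/5)*θ^2*y^2 - c) = 0 := by
      linear_combination c*h1 - (18/5)*θ^2*x*y^2*hcc
    have h2' : y * (63*θ*c*x^2 + 30*θ^3*y^2 - 35*c) = 0 := by
      linear_combination 35*c*h2 - 30*θ^3*y^3*hcc
    rcases mul_eq_zero.mp h1' with hx0 | he1 <;> rcases mul_eq_zero.mp h2' with hy0 | he2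
    · left; rw [hx0, hy0]
    · -- x = 0, y nontrivial
      subst hx0
      have hyy : 6*θ^3*((y - y1)*(y + y1)) = 0 := by
        linear_combination (1/5)*he2 - hy1sq
      rcases mul_eq_zero.mp hyy with h | h
      · exact absurd h (by positivity)
      rcases mul_eq_zero.mp h with h' | h'
      · right; right; right; left; rw [sub_eq_zero.mp h']
      · right; right; right; right; left; rw [eq_neg_of_add_eq_zero_left h']
    · -- y = 0, x nontrivial
      subst hy0
      have hxx : c*((x - 1)*(x + 1)) = 0 := by linear_combination he1
      rcases mul_eq_zero.mp hxx with h | h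
      · exact absurd h hcne
      rcases mul_eq_zero.mp h with h' | h'
      · right; left; rw [sub_eq_zero.mp h']
      · right; right; left; rw [eq_neg_of_add_eq_zero_left h']
    · -- both nontrivial
      have hyy : 984*θ^3*y^2 = 35*c*(9*θ-5) := by linear_combination 315*θ*he1 - 5*he2
      have hyy' : 984*θ^3*((y - y2)*(y + y2)) = 0 := by linear_combination hyy - hy2sq
      have hxx : c*(164*θ*((x - x1)*(x + x1))) = 0 := by
        linear_combination 164*θ*he1 - (3/5)*hyy - c*hx1sq
      rcases mul_eq_zero.mp hxx with h | h
      · exact absurd h hcne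
      rcases mul_eq_zero.mp h with h | h
      · exact absurd h (by positivity)
      rcases mul_eq_zero.mp hyy' with h2'' | h2''
      · exact absurd h2'' (by positivity)
      rcases mul_eq_zero.mp h with hx' | hx' <;> rcases mul_eq_zero.mp h2'' with hy' | hy'
      · right; right; right; right; right; left
        rw [sub_eq_zero.mp hx', sub_eq_zero.mp hy']
      · right; right; right; right; right; right; left
        rw [sub_eq_zero.mp hx', eq_neg_of_add_eq_zero_left hy']
      · right; right; right; right; right; right; right; left
        rw [eq_neg_of_add_eq_zero_left hx', sub_eq_zero.mp hy']
      · right; right; right; right; right; right; right; right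
        rw [eq_neg_of_add_eq_zero_left hx', eq_neg_of_add_eq_zero_left hy']
  · rintro (h | h | h | h | h | h | h | h | h) <;>
      rw [Prod.mk.injEq] at h <;> obtain ⟨hx', hy'⟩ := h <;> subst hx' <;> subst hy'
    · constructor <;> ring
    · constructor <;> ring
    · constructor <;> ring
    · exact keyB y1 hy1sq
    · exact keyB (-y1) (by linear_combination hy1sq)
    · exact keyA x1 y2 hx1sq hy2sq
    · exact keyA x1 (-y2) hx1sq (by linear_combination hy2sq)
    · exact keyA (-x1) y2 (by linear_combination hx1sq) hy2sq
    · exact keyA (-x1) (-y2) (by linear_combination hx1sq) (by linear_combination hy2sq)
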